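/- The causal-support condition is sound: suppose every precondition atom (t = y) of every action a_j in a sequence a₁,…,a_N is assigned a support, which is either the initial state (if s₀(t) = y) or an earlier action a_i (i < j) with effect (t, y), and in either case no action strictly between the supporter and j has an effect on t with a value different from y. Then every action's preconditions hold in the state in which it is applied, i.e., the sequence is an executable plan. -/
import Mathlib


/-- Soundness of causal supports: if every precondition atom `(t, y)` of every action
`a_j` has a support — either the initial state (with `s 0 t = y`) or an earlier action
`a_i`, `i < j`, with effect `(t, y)` — such that no action strictly between the supporter
and `j` assigns `t` a value different from `y`, then every action's preconditions hold in
the state where it is applied. -/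
theorem stmt_8 {Term Val : Type*}
    (pre : ℕ → Term → Val → Prop) (eff : ℕ → Term → Option Val)
    (s : ℕ → Term → Val)
    (hupd : ∀ k t, s (k + 1) t = (eff (k + 1) t).getD (s k t))
    (N : ℕ)
    (hsup : ∀ j, 1 ≤ j → j ≤ N → ∀ t y, pre j t y →
      (s 0 t = y ∧ ∀ i', 1 ≤ i' → i' < j → ∀ y', eff i' t = some y' → y' = y) ∨
      (∃ i, 1 ≤ i ∧ i < j ∧ eff i t = some y ∧
        ∀ i', i < i' → i' < j → ∀ y', eff i' t = some y' → y' = y)) :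
    ∀ j, 1 ≤ j → j ≤ N → ∀ t y, pre j t y → s (j - 1) t = y := by
  have prop : ∀ (t : Term) (y : Val) (m n : ℕ), m ≤ n → s m t = y →
      (∀ i', m < i' → i' ≤ n → ∀ y', eff i' t = some y' → y' = y) → s n t = y := by
    intro t y m n
    induction n with
    | zero => intro h hm _; obtain rfl : m = 0 := Nat.le_zero.mp h; exact hm
    | succ n ih =>
      intro hmn hm hno
      rcases Nat.lt_or_ge m (n+1) with h | h
      · have hsn : s n t = y := ih (by omega) hm (fun i' h1 h2 => hno i' h1 (by omega))
        rw [hupd]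
        cases he : eff (n+1) t with
        | none => simpa [he] using hsn
        | some y' => simpa [he] using hno (n+1) (by omega) le_rfl y' he
      · have : m = n + 1 := by omega
        subst this; exact hm
  intro j hj hjN t y hpre
  rcases hsup j hj hjN t y hpre with ⟨h0, hno⟩ | ⟨i, hi1, hij, heff, hno⟩
  · exact prop t y 0 (j-1) (by omega) h0 (fun i' h1 h2 => hno i' (by omega) (by omega))
  · have hsi : s i t = y := by
      obtain ⟨i', rfl⟩ := Nat.exists_eq_add_of_le hi1
      rw [Nat.add_comm] at heff ⊢
      rw [hupd]; simp [heff]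
    exact prop t y i (j-1) (by omega) hsi (fun i' h1 h2 => hno i' h1 (by omega))
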